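/- For words c and c' in Z4^r × Z4^s, and T the simultaneous cyclic shift operator on both blocks, the inner product satisfies c' · T^{lcm(r,s)-1}(c) = c · T(c'). Consequently, if c' is orthogonal to every element of a double cyclic code C, then T(c') is also orthogonal to every element of C. -/

import Mathlib

open Polynomial

abbrev Z4 := ZMod 4

abbrev Rq (n : ℕ) := Polynomial Z4 ⧸ Ideal.span ({(X : Polynomial Z4) ^ n - 1} : Set (Polynomial Z4))

noncomputable def mkQ (n : ℕ) (p : Polynomial Z4) : Rq n := Ideal.Quotient.mk _ p

noncomputable def toPoly {n : ℕ} (c : Fin n → Z4) : Polynomial Z4 :=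
  ∑ i, Polynomial.C (c i) * X ^ (i : ℕ)

noncomputable def tau {r s : ℕ} (c : (Fin r → Z4) × (Fin s → Z4)) : Rq r × Rq s :=
  (mkQ r (toPoly c.1), mkQ s (toPoly c.2))

def shiftT {r s : ℕ} (c : (Fin r → Z4) × (Fin s → Z4)) : (Fin r → Z4) × (Fin s → Z4) :=
  (fun i => c.1 ((finRotate r).symm i), fun j => c.2 ((finRotate s).symm j))

def innerProd {r s : ℕ} (c c' : (Fin r → Z4) × (Fin s → Z4)) : Z4 :=
  ∑ i, c.1 i * c'.1 i + ∑ j, c.2 j * c'.2 j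

open scoped Fin.NatCast Fin.CommRing

lemma rot_symm (n : ℕ) (i : Fin (n+1)) : (finRotate (n+1)).symm i = i - 1 := by
  rw [Equiv.symm_apply_eq, finRotate_succ_apply, sub_add_cancel]

lemma rot_symm_iter (n k : ℕ) (i : Fin (n+1)) :
    ((finRotate (n+1)).symm)^[k] i = i - (k : Fin (n+1)) := by
  induction k with
  | zero => simp
  | succ k ih =>
      rw [Function.iterate_succ_apply', ih, rot_symm]
      push_cast
      ring

lemma shift_iter (r s k : ℕ) (c : (Fin (r+1) → Z4) × (Fin (s+1) → Z4)) :
    shiftT^[k] c = (fun i => c.1 (i - (k : Fin (r+1))), fun j => c.2 (j - (k : Fin (s+1)))) := by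
  induction k with
  | zero => simp
  | succ k ih =>
      rw [Function.iterate_succ_apply', ih]
      ext i <;> simp [shiftT, rot_symm] <;> ring_nf

lemma cast_lcm_sub_one (r m : ℕ) (h1 : 1 ≤ m) (hdvd : (r+1) ∣ m) :
    ((m - 1 : ℕ) : Fin (r+1)) = -1 := by
  rw [Nat.cast_sub h1, Nat.cast_one,
    (CharP.cast_eq_zero_iff (Fin (r+1)) (r+1) m).mpr hdvd, zero_sub]

lemma key_sum (n : ℕ) (a b : Fin (n+1) → Z4) :
    (∑ i, a i * b (i + 1)) = ∑ i, b i * a (i - 1) := by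
  rw [← Equiv.sum_comp (Equiv.addRight (1 : Fin (n+1))) (fun i => b i * a (i - 1))]
  simp [mul_comm]

theorem stmt_1 (r s : ℕ) (hr : 0 < r) (hs : 0 < s) :
    (∀ c c' : (Fin r → Z4) × (Fin s → Z4),
        innerProd c' (shiftT^[Nat.lcm r s - 1] c) = innerProd c (shiftT c')) ∧
    (∀ C : Submodule Z4 ((Fin r → Z4) × (Fin s → Z4)),
      (∀ c ∈ C, shiftT c ∈ C) →
      ∀ c' : (Fin r → Z4) × (Fin s → Z4),
        (∀ c ∈ C, innerProd c c' = 0) → (∀ c ∈ C, innerProd c (shiftT c') = 0)) := by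
  have part1 : ∀ c c' : (Fin r → Z4) × (Fin s → Z4),
      innerProd c' (shiftT^[Nat.lcm r s - 1] c) = innerProd c (shiftT c') := by
    obtain ⟨m, rfl⟩ : ∃ m, r = m + 1 := ⟨r - 1, (Nat.succ_pred_eq_of_pos hr).symm⟩
    obtain ⟨p, rfl⟩ : ∃ p, s = p + 1 := ⟨s - 1, (Nat.succ_pred_eq_of_pos hs).symm⟩
    intro c c'
    have h1 : 1 ≤ Nat.lcm (m+1) (p+1) :=
      Nat.one_le_iff_ne_zero.mpr (Nat.lcm_ne_zero (by omega) (by omega))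
    have hA : shiftT^[Nat.lcm (m+1) (p+1) - 1] c
        = (fun i => c.1 (i + 1), fun j => c.2 (j + 1)) := by
      rw [shift_iter]
      rw [cast_lcm_sub_one m _ h1 (Nat.dvd_lcm_left _ _),
        cast_lcm_sub_one p _ h1 (Nat.dvd_lcm_right _ _)]
      ext i <;> simp [sub_neg_eq_add]
    rw [hA]
    simp only [innerProd, shiftT, rot_symm]
    rw [key_sum, key_sum]
  refine ⟨part1, ?_⟩
  intro C hC c' hperp c hc
  have hiter : ∀ k, shiftT^[k] c ∈ C := by
    intro k
    induction k with
    | zero => simpa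
    | succ k ih => rw [Function.iterate_succ_apply']; exact hC _ ih
  rw [← part1 c c']
  have comm : ∀ a b : (Fin r → Z4) × (Fin s → Z4), innerProd a b = innerProd b a := by
    intro a b; simp [innerProd, mul_comm]
  rw [comm]
  exact hperp _ (hiter _)
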